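/- arXiv:1711.03585 — 6 statements merged into one kernel-verified Lean document; each statement's English description precedes it below -/
import Mathlib

section
/- Let k > 0 and α ≤ β be real numbers, and let T_mono = {(2k) • u(θ) : θ ∈ [α, β]} and T_multi = {k • u(θ₁) + k • u(θ₂) : θ₁, θ₂ ∈ [α, β]} be subsets of ℝ². Then for every linear functional f : ℝ² → ℝ, the image f '' T_mono equals the image f '' T_multi. (In particular, the projections of the monostatic and multistatic k-space spectra onto any line l in the plane coincide.) -/
open Real Set

/-- The unit vector at angle `θ` in the Euclidean plane. -/
noncomputable def u (θ : ℝ) : EuclideanSpace ℝ (Fin 2) :=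
  (WithLp.equiv 2 (Fin 2 → ℝ)).symm ![Real.cos θ, Real.sin θ]

lemma continuous_u : Continuous u := by
  have : Continuous fun θ : ℝ => (![Real.cos θ, Real.sin θ] : Fin 2 → ℝ) := by
    apply continuous_pi
    intro i
    fin_cases i <;> simp [Real.continuous_cos, Real.continuous_sin]
  exact (PiLp.continuous_toLp 2 (fun _ : Fin 2 => ℝ)).comp this

/-- Projections of the monostatic and multistatic k-space spectra onto any line coincide. -/
theorem proj_mono_eq_proj_multi (k α β : ℝ) (hk : 0 < k) (hαβ : α ≤ β)
    (Tmono Tmulti : Set (EuclideanSpace ℝ (Fin 2)))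
    (hmono : Tmono = {p | ∃ θ ∈ Set.Icc α β, p = (2 * k) • u θ})
    (hmulti : Tmulti = {p | ∃ θ₁ ∈ Set.Icc α β, ∃ θ₂ ∈ Set.Icc α β,
      p = k • u θ₁ + k • u θ₂})
    (f : EuclideanSpace ℝ (Fin 2) →ₗ[ℝ] ℝ) :
    f '' Tmono = f '' Tmulti := by
  subst hmono hmulti
  apply Set.Subset.antisymm
  · rintro x ⟨p, ⟨θ, hθ, rfl⟩, rfl⟩
    refine ⟨(2 * k) • u θ, ⟨θ, hθ, θ, hθ, ?_⟩, rfl⟩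
    rw [two_mul, add_smul]
  · rintro x ⟨p, ⟨θ₁, hθ₁, θ₂, hθ₂, rfl⟩, rfl⟩
    -- find θ with f (u θ) = (f (u θ₁) + f (u θ₂)) / 2
    have hg : Continuous fun θ => f (u θ) :=
      f.continuous_of_finiteDimensional.comp continuous_u
    have hmem : (f (u θ₁) + f (u θ₂)) / 2 ∈ Set.uIcc (f (u θ₁)) (f (u θ₂)) := by
      rcases le_total (f (u θ₁)) (f (u θ₂)) with h | h
      · rw [Set.uIcc_of_le h]; constructor <;> linarith
      · rw [Set.uIcc_of_ge h]; constructor <;> linarith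
    have := intermediate_value_uIcc (f := fun θ => f (u θ)) (hg.continuousOn (s := Set.uIcc θ₁ θ₂))
    obtain ⟨θ, hθmem, hθ⟩ := this hmem
    have hθαβ : θ ∈ Set.Icc α β := by
      have : Set.uIcc θ₁ θ₂ ⊆ Set.Icc α β := Set.uIcc_subset_Icc hθ₁ hθ₂
      exact this hθmem
    refine ⟨(2 * k) • u θ, ⟨θ, hθαβ, rfl⟩, ?_⟩
    simp only [map_smul, map_add, smul_eq_mul]
    simp only [] at hθ; rw [hθ]; ring
end

section
/- Let c ∈ ℝ², r > 0, and α ≤ β, and let A = {c + r • u(θ) : θ ∈ [α, β]} be a circular arc; the associated circular segment is the convex hull conv(A). Let L = {p ∈ ℝ² : f(p) = c₀} be a line, where f : ℝ² → ℝ is a nonzero linear functional and c₀ ∈ ℝ. If L ∩ conv(A) is nonempty, then L ∩ A is nonempty; that is, any line meeting the circular segment contains at least one point of its arc boundary. -/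
open Real Set

/-- Any line meeting the circular segment (convex hull of an arc) contains at least one
point of the arc itself. -/
theorem line_inter_segment_meets_arc (c : EuclideanSpace ℝ (Fin 2)) (r : ℝ) (hr : 0 < r)
    (α β : ℝ) (hαβ : α ≤ β)
    (A : Set (EuclideanSpace ℝ (Fin 2)))
    (hA : A = {p | ∃ θ ∈ Set.Icc α β, p = c + r • u θ})
    (f : EuclideanSpace ℝ (Fin 2) →ₗ[ℝ] ℝ) (hf : f ≠ 0) (c₀ : ℝ)
    (L : Set (EuclideanSpace ℝ (Fin 2)))
    (hL : L = {p | f p = c₀})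
    (hne : (L ∩ convexHull ℝ A).Nonempty) :
    (L ∩ A).Nonempty := by
  -- A is the image of Icc α β under a continuous map
  have hAimg : A = (fun θ => c + r • u θ) '' Set.Icc α β := by
    rw [hA]; ext p
    simp [Set.mem_image, eq_comm]
  have hcont : Continuous (fun θ => c + r • u θ) :=
    continuous_const.add (continuous_const.fun_smul continuous_u)
  -- f '' A is preconnected, hence convex in ℝ
  have hconn : IsPreconnected (f '' A) := by
    rw [hAimg, ← Set.image_comp]
    exact (isPreconnected_Icc).image _
      ((f.continuous_of_finiteDimensional.comp hcont).continuousOn)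
  have hconv : Convex ℝ (f '' A) := hconn.ordConnected.convex
  -- c₀ ∈ f '' convexHull A = convexHull (f '' A) = f '' A
  obtain ⟨p, hpL, hpC⟩ := hne
  have hc₀ : c₀ ∈ f '' (convexHull ℝ A) := ⟨p, hpC, by rw [hL] at hpL; exact hpL⟩
  rw [f.image_convexHull, hconv.convexHull_eq] at hc₀
  obtain ⟨q, hqA, hq⟩ := hc₀
  exact ⟨q, by rw [hL]; exact hq, hqA⟩
end

section
/- Let D > 0, λ > 0, and L₁, L₂ > 0. Then ∫_{−L₂/2}^{L₂/2} (2/λ)·[ (x + L₁/2)/√(D² + (x + L₁/2)²) − (x − L₁/2)/√(D² + (x − L₁/2)²) ] dx = (4D/λ)·( √(1 + ((L₁ + L₂)/(2D))²) − √(1 + ((L₁ − L₂)/(2D))²) ); that is, the space-bandwidth product of the symmetric parallel-planes geometry G1 admits this closed form. -/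
open Real

lemma sqrt_pos_aux (D a x : ℝ) (hD : 0 < D) : 0 < Real.sqrt (D ^ 2 + (x + a) ^ 2) := by
  apply Real.sqrt_pos.2
  positivity

lemma hasDerivAt_aux (D a : ℝ) (hD : 0 < D) (x : ℝ) :
    HasDerivAt (fun y => Real.sqrt (D ^ 2 + (y + a) ^ 2))
      ((x + a) / Real.sqrt (D ^ 2 + (x + a) ^ 2)) x := by
  have h0 : (0:ℝ) < D ^ 2 + (x + a) ^ 2 := by positivity
  have h1 : HasDerivAt (fun y : ℝ => D ^ 2 + (y + a) ^ 2) (2 * (x + a)) x := by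
    have hid : HasDerivAt (fun y : ℝ => y + a) 1 x := (hasDerivAt_id x).add_const a
    have := (hid.pow 2).const_add (D ^ 2)
    simpa using this
  have hs := (Real.hasDerivAt_sqrt (ne_of_gt h0)).comp x h1
  convert hs using 1
  have hsq := sqrt_pos_aux D a x hD
  · rfl
  · rfl
  · rfl
  field_simp

/-- Closed form for the space-bandwidth product of the symmetric parallel-planes
geometry G1. -/
theorem sbp_G1 (D lam L₁ L₂ : ℝ) (hD : 0 < D) (hlam : 0 < lam)
    (hL₁ : 0 < L₁) (hL₂ : 0 < L₂) :
    ∫ x in (-L₂ / 2)..(L₂ / 2),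
        (2 / lam) * ((x + L₁ / 2) / Real.sqrt (D ^ 2 + (x + L₁ / 2) ^ 2)
          - (x - L₁ / 2) / Real.sqrt (D ^ 2 + (x - L₁ / 2) ^ 2))
      = (4 * D / lam) * (Real.sqrt (1 + ((L₁ + L₂) / (2 * D)) ^ 2)
          - Real.sqrt (1 + ((L₁ - L₂) / (2 * D)) ^ 2)) := by
  set F : ℝ → ℝ := fun x => (2 / lam) *
      (Real.sqrt (D ^ 2 + (x + L₁ / 2) ^ 2) - Real.sqrt (D ^ 2 + (x - L₁ / 2) ^ 2)) with hF
  have hderiv : ∀ x ∈ Set.uIcc (-L₂ / 2) (L₂ / 2),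
      HasDerivAt F ((2 / lam) * ((x + L₁ / 2) / Real.sqrt (D ^ 2 + (x + L₁ / 2) ^ 2)
          - (x - L₁ / 2) / Real.sqrt (D ^ 2 + (x - L₁ / 2) ^ 2))) x := by
    intro x _
    have h1 := hasDerivAt_aux D (L₁ / 2) hD x
    have h2 := hasDerivAt_aux D (-(L₁ / 2)) hD x
    have h2' : HasDerivAt (fun y => Real.sqrt (D ^ 2 + (y - L₁ / 2) ^ 2))
        ((x - L₁ / 2) / Real.sqrt (D ^ 2 + (x - L₁ / 2) ^ 2)) x := by
      simpa [sub_eq_add_neg] using h2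
    exact ((h1.sub h2').const_mul (2 / lam))
  have hcont : IntervalIntegrable (fun x =>
      (2 / lam) * ((x + L₁ / 2) / Real.sqrt (D ^ 2 + (x + L₁ / 2) ^ 2)
          - (x - L₁ / 2) / Real.sqrt (D ^ 2 + (x - L₁ / 2) ^ 2)))
      MeasureTheory.volume (-L₂ / 2) (L₂ / 2) := by
    apply Continuous.intervalIntegrable
    have c1 : ∀ a : ℝ, Continuous (fun x : ℝ => (x + a) / Real.sqrt (D ^ 2 + (x + a) ^ 2)) := by
      intro a
      apply Continuous.div (by continuity) (by continuity)
      intro x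
      exact ne_of_gt (sqrt_pos_aux D a x hD)
    exact continuous_const.mul ((c1 (L₁ / 2)).sub (by simpa [sub_eq_add_neg] using c1 (-(L₁ / 2))))
  rw [intervalIntegral.integral_eq_sub_of_hasDerivAt hderiv hcont]
  have key : ∀ s : ℝ, Real.sqrt (1 + (s / (2 * D)) ^ 2)
      = Real.sqrt (D ^ 2 + (s / 2) ^ 2) / D := by
    intro s
    have h : (1 + (s / (2 * D)) ^ 2) = (D ^ 2 + (s / 2) ^ 2) / D ^ 2 := by
      field_simp
    rw [h, Real.sqrt_div (by positivity), Real.sqrt_sq hD.le]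
  rw [key, key]
  have e1 : D ^ 2 + (L₂ / 2 + L₁ / 2) ^ 2 = D ^ 2 + ((L₁ + L₂) / 2) ^ 2 := by ring
  have e2 : D ^ 2 + (L₂ / 2 - L₁ / 2) ^ 2 = D ^ 2 + ((L₁ - L₂) / 2) ^ 2 := by ring
  have e3 : D ^ 2 + (-L₂ / 2 + L₁ / 2) ^ 2 = D ^ 2 + ((L₁ - L₂) / 2) ^ 2 := by ring
  have e4 : D ^ 2 + (-L₂ / 2 - L₁ / 2) ^ 2 = D ^ 2 + ((L₁ + L₂) / 2) ^ 2 := by ring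
  simp only [hF, e1, e2, e3, e4]
  field_simp
  ring
end

section
/- Let D > 0, λ > 0, and L₂ > 0 be fixed, and define F(L₁) = (4D/λ)·( √(1 + ((L₁ + L₂)/(2D))²) − √(1 + ((L₁ − L₂)/(2D))²) ) for L₁ ∈ ℝ. Then F(L₁) tends to 4L₂/λ as L₁ → ∞; i.e., the space-bandwidth product of the symmetric parallel-planes geometry with unbounded aperture tends to 4L₂/λ and does not increase indefinitely with aperture size. -/
open Real Filter

/-- With unbounded aperture, the space-bandwidth product of the symmetric
parallel-planes geometry tends to `4 L₂ / λ`. -/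
theorem sbp_G1_unbounded_aperture (D lam L₂ : ℝ) (hD : 0 < D) (hlam : 0 < lam)
    (hL₂ : 0 < L₂) :
    Tendsto (fun L₁ : ℝ =>
        (4 * D / lam) * (Real.sqrt (1 + ((L₁ + L₂) / (2 * D)) ^ 2)
          - Real.sqrt (1 + ((L₁ - L₂) / (2 * D)) ^ 2)))
      atTop (nhds (4 * L₂ / lam)) := by
  set g : ℝ → ℝ := fun t =>
    (4 * L₂ / (lam * D)) / (Real.sqrt (t ^ 2 + ((1 + L₂ * t) / (2 * D)) ^ 2)
      + Real.sqrt (t ^ 2 + ((1 - L₂ * t) / (2 * D)) ^ 2)) with hgdef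
  have hg0 : g 0 = 4 * L₂ / lam := by
    simp only [hgdef]
    norm_num
    rw [Real.sqrt_sq (by positivity : (0:ℝ) ≤ D⁻¹ * (1/2))]
    field_simp
    ring
  have hgc : ContinuousAt g 0 := by
    apply ContinuousAt.div continuousAt_const
    · fun_prop
    · positivity
  have h1 : Tendsto (fun L : ℝ => g L⁻¹) atTop (nhds (4 * L₂ / lam)) := by
    rw [← hg0]
    exact hgc.tendsto.comp tendsto_inv_atTop_zero
  refine h1.congr' ?_
  filter_upwards [eventually_gt_atTop (0:ℝ)] with L hL
  have hL0 : L ≠ 0 := hL.ne'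
  have hA : 1 + ((L + L₂) / (2 * D)) ^ 2
      = L ^ 2 * ((L⁻¹) ^ 2 + ((1 + L₂ * L⁻¹) / (2 * D)) ^ 2) := by
    field_simp
  have hB : 1 + ((L - L₂) / (2 * D)) ^ 2
      = L ^ 2 * ((L⁻¹) ^ 2 + ((1 - L₂ * L⁻¹) / (2 * D)) ^ 2) := by
    field_simp
  have sA : Real.sqrt (1 + ((L + L₂) / (2 * D)) ^ 2)
      = L * Real.sqrt ((L⁻¹) ^ 2 + ((1 + L₂ * L⁻¹) / (2 * D)) ^ 2) := by
    rw [hA, Real.sqrt_mul (sq_nonneg L), Real.sqrt_sq hL.le]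
  have sB : Real.sqrt (1 + ((L - L₂) / (2 * D)) ^ 2)
      = L * Real.sqrt ((L⁻¹) ^ 2 + ((1 - L₂ * L⁻¹) / (2 * D)) ^ 2) := by
    rw [hB, Real.sqrt_mul (sq_nonneg L), Real.sqrt_sq hL.le]
  set sa := Real.sqrt ((L⁻¹) ^ 2 + ((1 + L₂ * L⁻¹) / (2 * D)) ^ 2) with hsadef
  set sb := Real.sqrt ((L⁻¹) ^ 2 + ((1 - L₂ * L⁻¹) / (2 * D)) ^ 2) with hsbdef
  have hsa : sa ^ 2 = (L⁻¹) ^ 2 + ((1 + L₂ * L⁻¹) / (2 * D)) ^ 2 :=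
    Real.sq_sqrt (by positivity)
  have hsb : sb ^ 2 = (L⁻¹) ^ 2 + ((1 - L₂ * L⁻¹) / (2 * D)) ^ 2 :=
    Real.sq_sqrt (by positivity)
  have hden : 0 < sa + sb := by positivity
  simp only [hgdef, sA, sB]
  rw [div_eq_iff hden.ne']
  have key : sa ^ 2 - sb ^ 2 = L₂ * L⁻¹ / D ^ 2 := by
    rw [hsa, hsb]; field_simp; ring
  have expand : 4 * D / lam * (L * sa - L * sb) * (sa + sb)
      = 4 * D / lam * L * (sa ^ 2 - sb ^ 2) := by ring
  rw [expand, key]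
  field_simp
end

section
/- Let D > 0, λ > 0, and L₁ > 0 be fixed, and define G(L₂) = (4D/λ)·( √(1 + ((L₁ + L₂)/(2D))²) − √(1 + ((L₁ − L₂)/(2D))²) ) for L₂ ∈ ℝ. Then G(L₂) tends to 4L₁/λ as L₂ → ∞; i.e., the space-bandwidth product of the symmetric parallel-planes geometry with unbounded scene tends to 4L₁/λ, an upper bound independent of the distance D. -/
open Real Filter

/-- With unbounded scene, the space-bandwidth product of the symmetric parallel-planes
geometry tends to `4 L₁ / λ`, independently of the distance `D`. -/
theorem sbp_G1_unbounded_scene (D lam L₁ : ℝ) (hD : 0 < D) (hlam : 0 < lam)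
    (hL₁ : 0 < L₁) :
    Tendsto (fun L₂ : ℝ =>
        (4 * D / lam) * (Real.sqrt (1 + ((L₁ + L₂) / (2 * D)) ^ 2)
          - Real.sqrt (1 + ((L₁ - L₂) / (2 * D)) ^ 2)))
      atTop (nhds (4 * L₁ / lam)) := by
  have hD' : D ≠ 0 := hD.ne'
  have hlam' : lam ≠ 0 := hlam.ne'
  set g : ℝ → ℝ := fun L₂ =>
    (4 * L₁ / lam) * (D * (Real.sqrt (L₂⁻¹ ^ 2 + ((L₁ * L₂⁻¹ + 1) / (2 * D)) ^ 2)
      + Real.sqrt (L₂⁻¹ ^ 2 + ((L₁ * L₂⁻¹ - 1) / (2 * D)) ^ 2)))⁻¹ with hg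
  have hinv : Tendsto (fun L₂ : ℝ => L₂⁻¹) atTop (nhds 0) := tendsto_inv_atTop_zero
  have h1 : Tendsto (fun L₂ : ℝ => L₂⁻¹ ^ 2 + ((L₁ * L₂⁻¹ + 1) / (2 * D)) ^ 2) atTop
      (nhds ((0:ℝ) ^ 2 + ((L₁ * 0 + 1) / (2 * D)) ^ 2)) :=
    (hinv.pow 2).add
      ((((tendsto_const_nhds.mul hinv).add tendsto_const_nhds).div_const _).pow 2)
  have h2 : Tendsto (fun L₂ : ℝ => L₂⁻¹ ^ 2 + ((L₁ * L₂⁻¹ - 1) / (2 * D)) ^ 2) atTop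
      (nhds ((0:ℝ) ^ 2 + ((L₁ * 0 - 1) / (2 * D)) ^ 2)) :=
    (hinv.pow 2).add
      ((((tendsto_const_nhds.mul hinv).sub tendsto_const_nhds).div_const _).pow 2)
  have e1 : (0:ℝ) ^ 2 + ((L₁ * 0 + 1) / (2 * D)) ^ 2 = (1 / (2 * D)) ^ 2 := by ring
  have e2 : (0:ℝ) ^ 2 + ((L₁ * 0 - 1) / (2 * D)) ^ 2 = (1 / (2 * D)) ^ 2 := by ring
  rw [e1] at h1
  rw [e2] at h2
  have hs1 : Tendsto (fun L₂ : ℝ =>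
      Real.sqrt (L₂⁻¹ ^ 2 + ((L₁ * L₂⁻¹ + 1) / (2 * D)) ^ 2)) atTop (nhds (1 / (2 * D))) := by
    have h := Real.continuous_sqrt.continuousAt.tendsto.comp h1
    rw [Real.sqrt_sq (by positivity : (0:ℝ) ≤ 1 / (2 * D))] at h
    exact h
  have hs2 : Tendsto (fun L₂ : ℝ =>
      Real.sqrt (L₂⁻¹ ^ 2 + ((L₁ * L₂⁻¹ - 1) / (2 * D)) ^ 2)) atTop (nhds (1 / (2 * D))) := by
    have h := Real.continuous_sqrt.continuousAt.tendsto.comp h2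
    rw [Real.sqrt_sq (by positivity : (0:ℝ) ≤ 1 / (2 * D))] at h
    exact h
  have hDsum : Tendsto (fun L₂ : ℝ =>
      D * (Real.sqrt (L₂⁻¹ ^ 2 + ((L₁ * L₂⁻¹ + 1) / (2 * D)) ^ 2)
        + Real.sqrt (L₂⁻¹ ^ 2 + ((L₁ * L₂⁻¹ - 1) / (2 * D)) ^ 2))) atTop
      (nhds (D * (1 / (2 * D) + 1 / (2 * D)))) := tendsto_const_nhds.mul (hs1.add hs2)
  have hone : D * (1 / (2 * D) + 1 / (2 * D)) = 1 := by field_simp; ring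
  rw [hone] at hDsum
  have hgl : Tendsto g atTop (nhds ((4 * L₁ / lam) * (1:ℝ)⁻¹)) :=
    tendsto_const_nhds.mul (hDsum.inv₀ one_ne_zero)
  rw [inv_one, mul_one] at hgl
  refine hgl.congr' ?_
  filter_upwards [eventually_gt_atTop (0:ℝ)] with L₂ hL₂
  have hL₂' : L₂ ≠ 0 := hL₂.ne'
  have harg1 : 1 + ((L₁ + L₂) / (2 * D)) ^ 2
      = L₂ ^ 2 * (L₂⁻¹ ^ 2 + ((L₁ * L₂⁻¹ + 1) / (2 * D)) ^ 2) := by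
    rw [inv_pow]; field_simp
  have harg2 : 1 + ((L₁ - L₂) / (2 * D)) ^ 2
      = L₂ ^ 2 * (L₂⁻¹ ^ 2 + ((L₁ * L₂⁻¹ - 1) / (2 * D)) ^ 2) := by
    rw [inv_pow]; field_simp
  have hsu : Real.sqrt (1 + ((L₁ + L₂) / (2 * D)) ^ 2)
      = L₂ * Real.sqrt (L₂⁻¹ ^ 2 + ((L₁ * L₂⁻¹ + 1) / (2 * D)) ^ 2) := by
    rw [harg1, Real.sqrt_mul (sq_nonneg L₂), Real.sqrt_sq hL₂.le]
  have hsv : Real.sqrt (1 + ((L₁ - L₂) / (2 * D)) ^ 2)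
      = L₂ * Real.sqrt (L₂⁻¹ ^ 2 + ((L₁ * L₂⁻¹ - 1) / (2 * D)) ^ 2) := by
    rw [harg2, Real.sqrt_mul (sq_nonneg L₂), Real.sqrt_sq hL₂.le]
  have hupos : 0 < Real.sqrt (L₂⁻¹ ^ 2 + ((L₁ * L₂⁻¹ + 1) / (2 * D)) ^ 2) :=
    Real.sqrt_pos.2 (by positivity)
  have hvpos : 0 < Real.sqrt (L₂⁻¹ ^ 2 + ((L₁ * L₂⁻¹ - 1) / (2 * D)) ^ 2) :=
    Real.sqrt_pos.2 (by positivity)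
  have hu2 : (L₂ * Real.sqrt (L₂⁻¹ ^ 2 + ((L₁ * L₂⁻¹ + 1) / (2 * D)) ^ 2)) ^ 2
      = 1 + ((L₁ + L₂) / (2 * D)) ^ 2 := by
    rw [← hsu]; exact Real.sq_sqrt (by positivity)
  have hv2 : (L₂ * Real.sqrt (L₂⁻¹ ^ 2 + ((L₁ * L₂⁻¹ - 1) / (2 * D)) ^ 2)) ^ 2
      = 1 + ((L₁ - L₂) / (2 * D)) ^ 2 := by
    rw [← hsv]; exact Real.sq_sqrt (by positivity)
  obtain ⟨u', hu'⟩ : ∃ x, Real.sqrt (L₂⁻¹ ^ 2 + ((L₁ * L₂⁻¹ + 1) / (2 * D)) ^ 2) = x := ⟨_, rfl⟩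
  obtain ⟨v', hv'⟩ : ∃ x, Real.sqrt (L₂⁻¹ ^ 2 + ((L₁ * L₂⁻¹ - 1) / (2 * D)) ^ 2) = x := ⟨_, rfl⟩
  rw [hu'] at hsu hupos hu2
  rw [hv'] at hsv hvpos hv2
  have hsumpos : 0 < L₂ * u' + L₂ * v' := by positivity
  have key : L₂ * u' - L₂ * v' = (L₁ * L₂ / D ^ 2) / (L₂ * u' + L₂ * v') := by
    rw [eq_div_iff hsumpos.ne']
    have h : (L₂ * u' - L₂ * v') * (L₂ * u' + L₂ * v')
        = (L₂ * u') ^ 2 - (L₂ * v') ^ 2 := by ring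
    rw [h, hu2, hv2]
    field_simp
    ring
  simp only [hg]
  rw [hu', hv', hsu, hsv, key]
  have hne : u' + v' ≠ 0 := by positivity
  field_simp
end

section
/- Let λ > 0 and L₁, L₂ > 0 be fixed, and for D > 0 define S(D) = (4D/λ)·( √(1 + ((L₁ + L₂)/(2D))²) − √(1 + ((L₁ − L₂)/(2D))²) ). Then D·S(D) tends to 2·L₁·L₂/λ as D → ∞; equivalently, in the far-field (Fresnel) regime D ≫ L₁, L₂ the space-bandwidth product of the symmetric parallel-planes geometry is asymptotic to the classical degrees-of-freedom count 2L₁L₂/(λD). -/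
open Real Filter

/-- In the far-field (Fresnel) regime, the space-bandwidth product of the symmetric
parallel-planes geometry is asymptotic to the classical degrees-of-freedom count
`2 L₁ L₂ / (λ D)`. -/
theorem sbp_G1_fresnel_limit (lam L₁ L₂ : ℝ) (hlam : 0 < lam)
    (hL₁ : 0 < L₁) (hL₂ : 0 < L₂) :
    Tendsto (fun D : ℝ =>
        D * ((4 * D / lam) * (Real.sqrt (1 + ((L₁ + L₂) / (2 * D)) ^ 2)
          - Real.sqrt (1 + ((L₁ - L₂) / (2 * D)) ^ 2))))
      atTop (nhds (2 * L₁ * L₂ / lam)) := by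
  set a := L₁ + L₂
  set b := L₁ - L₂
  have hs1 : Tendsto (fun D : ℝ => Real.sqrt (1 + (a / (2 * D)) ^ 2)) atTop (nhds 1) := by
    have h0 : Tendsto (fun D : ℝ => a / (2 * D)) atTop (nhds 0) := by
      have := (tendsto_const_nhds (x := a) (f := atTop (α := ℝ))).div_atTop
        (tendsto_id.const_mul_atTop two_pos :
          Tendsto (fun D : ℝ => 2 * D) atTop atTop)
      exact this
    have : Tendsto (fun D : ℝ => 1 + (a / (2 * D)) ^ 2) atTop (nhds 1) := by
      have := (h0.pow 2)
      simpa using (tendsto_const_nhds (x := (1:ℝ))).add this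
    simpa [Function.comp_def] using (Real.continuous_sqrt.continuousAt.tendsto.comp this)
  have hs2 : Tendsto (fun D : ℝ => Real.sqrt (1 + (b / (2 * D)) ^ 2)) atTop (nhds 1) := by
    have h0 : Tendsto (fun D : ℝ => b / (2 * D)) atTop (nhds 0) := by
      have := (tendsto_const_nhds (x := b) (f := atTop (α := ℝ))).div_atTop
        (tendsto_id.const_mul_atTop two_pos :
          Tendsto (fun D : ℝ => 2 * D) atTop atTop)
      exact this
    have : Tendsto (fun D : ℝ => 1 + (b / (2 * D)) ^ 2) atTop (nhds 1) := by
      have := (h0.pow 2)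
      simpa using (tendsto_const_nhds (x := (1:ℝ))).add this
    simpa [Function.comp_def] using (Real.continuous_sqrt.continuousAt.tendsto.comp this)
  have hsum : Tendsto (fun D : ℝ =>
      (a ^ 2 - b ^ 2) / (lam * (Real.sqrt (1 + (a / (2 * D)) ^ 2)
        + Real.sqrt (1 + (b / (2 * D)) ^ 2)))) atTop (nhds ((a ^ 2 - b ^ 2) / (lam * 2))) := by
    apply Tendsto.div tendsto_const_nhds
    · have := (hs1.add hs2)
      simpa [one_add_one_eq_two] using (tendsto_const_nhds (x := lam)).mul this
    · positivity
  have key : ((a ^ 2 - b ^ 2) / (lam * 2)) = 2 * L₁ * L₂ / lam := by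
    simp only [a, b]; ring
  rw [← key]
  apply hsum.congr'
  filter_upwards [eventually_gt_atTop (0:ℝ)] with D hD
  have h1 : (0:ℝ) ≤ 1 + (a / (2 * D)) ^ 2 := by positivity
  have h2 : (0:ℝ) ≤ 1 + (b / (2 * D)) ^ 2 := by positivity
  set s1 := Real.sqrt (1 + (a / (2 * D)) ^ 2) with hs1d
  set s2 := Real.sqrt (1 + (b / (2 * D)) ^ 2) with hs2d
  have hs1pos : 0 < s1 := Real.sqrt_pos.mpr (by positivity)
  have hs2pos : 0 < s2 := Real.sqrt_pos.mpr (by positivity)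
  have hsq1 : s1 ^ 2 = 1 + (a / (2 * D)) ^ 2 := Real.sq_sqrt h1
  have hsq2 : s2 ^ 2 = 1 + (b / (2 * D)) ^ 2 := Real.sq_sqrt h2
  have hdiff : s1 ^ 2 - s2 ^ 2 = (a ^ 2 - b ^ 2) / (4 * D ^ 2) := by
    rw [hsq1, hsq2]
    have : (2 * D) ^ 2 = 4 * D ^ 2 := by ring
    rw [div_pow, div_pow, this]
    field_simp
    ring
  have hfac : s1 - s2 = (a ^ 2 - b ^ 2) / (4 * D ^ 2) / (s1 + s2) := by
    rw [← hdiff]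
    field_simp
    ring
  rw [hfac]
  field_simp
end
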